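/- Let g : ℕ → ℕ be monotone (nondecreasing) with g(b) ≥ b+1 for all b, let b ≥ 1, and let α, β be ordinals below ε₀ with α > β and coordinate bound |β| < b. Then g^β(b) ≤ g^α(b). -/

import Mathlib

open Ordinal

noncomputable def eps0 : Ordinal.{0} := Ordinal.nfp (fun a => Ordinal.omega0 ^ a) 0

/-- Rebuild an ordinal from a list of (exponent, coefficient) pairs. -/
noncomputable def ofCNF (L : List (Ordinal.{0} × Ordinal.{0})) : Ordinal.{0} :=
  L.foldr (fun p r => Ordinal.omega0 ^ p.1 * p.2 + r) 0

open scoped Classical in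
/-- The fundamental-sequence approximation `α[x]`. -/
noncomputable def fundSeq (x : ℕ) : Ordinal.{0} → Ordinal.{0} :=
  WellFounded.fix Ordinal.lt_wf (fun α IH =>
    if hα : α = 0 then 0
    else
      match hL : (Ordinal.CNF Ordinal.omega0 α).getLast? with
      | none => 0
      | some p =>
        if p.1 = 0 then Ordinal.pred α
        else if h : p.1 < α then
          ofCNF ((Ordinal.CNF Ordinal.omega0 α).dropLast
            ++ [(p.1, p.2 - 1), (IH p.1 h, (x : Ordinal))])
        else 0)

open scoped Classical in
/-- Transfinite iterates `g^α` of `g : ℕ → ℕ`, defined by `g^0(b) = b` and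
`g^α(b) = g^{α[b]}(g b)`. -/
noncomputable def iterOrd (g : ℕ → ℕ) : Ordinal.{0} → ℕ → ℕ :=
  WellFounded.fix Ordinal.lt_wf (fun α IH => fun b =>
    if hα : α = 0 then b
    else if h : fundSeq b α < α then IH (fundSeq b α) h (g b)
    else 0)

open scoped Classical in
/-- The coordinate bound `|α|`: the maximum of all coefficients and (hereditarily)
exponent-bounds appearing in the Cantor normal form of `α`. -/
noncomputable def coordBound : Ordinal.{0} → ℕ :=
  WellFounded.fix Ordinal.lt_wf (fun α IH =>
    ((Ordinal.CNF Ordinal.omega0 α).map (fun p =>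
      max (p.2.card.toNat) (if h : p.1 < α then IH p.1 h else 0))).foldr max 0)

lemma omega0_opow_eps0 : Ordinal.omega0 ^ eps0 = eps0 :=
  Ordinal.nfp_fp (Ordinal.isNormal_opow Ordinal.one_lt_omega0) 0

lemma omega0_opow_lt_eps0 {a : Ordinal} (h : a < eps0) : Ordinal.omega0 ^ a < eps0 := by
  rw [← omega0_opow_eps0]
  exact (Ordinal.opow_lt_opow_iff_right Ordinal.one_lt_omega0).2 h

lemma lt_omega0_opow_self {a : Ordinal} (h : a < eps0) : a < Ordinal.omega0 ^ a := by
  rcases lt_or_eq_of_le (Ordinal.right_le_opow a Ordinal.one_lt_omega0) with h' | h'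
  · exact h'
  · exact absurd h (not_lt.2 (Ordinal.nfp_le_fp
      (Ordinal.isNormal_opow Ordinal.one_lt_omega0).monotone zero_le h'.symm.le))

lemma add_lt_eps0 {a b : Ordinal} (ha : a < eps0) (hb : b < eps0) : a + b < eps0 := by
  have := Ordinal.principal_add_omega0_opow eps0
  rw [omega0_opow_eps0] at this
  exact this ha hb

lemma eps0_pos : 0 < eps0 := by
  have h1 : (Ordinal.omega0 ^ (0:Ordinal)) ≤ eps0 := by
    have := Ordinal.iterate_le_nfp (fun a => Ordinal.omega0 ^ a) 0 1
    simpa [eps0] using this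
  rw [Ordinal.opow_zero] at h1
  exact lt_of_lt_of_le zero_lt_one h1

lemma one_lt_eps0 : 1 < eps0 := by
  have := omega0_opow_lt_eps0 eps0_pos
  rwa [Ordinal.opow_zero] at this

lemma opow_mul_lt_eps0 {e c : Ordinal} (he : e < eps0) (hc : c < Ordinal.omega0) :
    Ordinal.omega0 ^ e * c < eps0 := by
  have h1 : Ordinal.omega0 ^ e * c < Ordinal.omega0 ^ e * Ordinal.omega0 :=
    (mul_lt_mul_iff_right₀ (Ordinal.opow_pos e Ordinal.omega0_pos)).2 hc
  have h2 : Ordinal.omega0 ^ e * Ordinal.omega0 = Ordinal.omega0 ^ (e + 1) := by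
    rw [Ordinal.opow_add, Ordinal.opow_one]
  exact lt_trans (h2 ▸ h1) (omega0_opow_lt_eps0 (add_lt_eps0 he one_lt_eps0))

open Ordinal in
lemma CNF_mul_add {e c r : Ordinal.{0}} (hc0 : c ≠ 0) (hcw : c < omega0) (hr : r < omega0 ^ e) :
    CNF omega0 (omega0 ^ e * c + r) = (e, c) :: CNF omega0 r := by
  have hec : (0:Ordinal) < omega0 ^ e * c :=
    mul_pos (opow_pos e omega0_pos) (pos_iff_ne_zero.2 hc0)
  have hα0 : omega0 ^ e * c + r ≠ 0 := by
    intro h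
    exact absurd h (ne_of_gt (lt_of_lt_of_le hec (le_self_add)))
  have hle : omega0 ^ e ≤ omega0 ^ e * c + r := by
    calc omega0 ^ e = omega0 ^ e * 1 := (mul_one _).symm
    _ ≤ omega0 ^ e * c := by
        exact mul_le_mul_right (Ordinal.one_le_iff_ne_zero.2 hc0) _
    _ ≤ _ := le_self_add
  have hlt : omega0 ^ e * c + r < omega0 ^ (e + 1) := by
    have h1 : omega0 ^ e * c + r < omega0 ^ e * c + omega0 ^ e := by
      exact add_lt_add_right hr _
    have h2 : omega0 ^ e * c + omega0 ^ e = omega0 ^ e * (c + 1) := by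
      rw [mul_add, mul_one]
    have h3 : omega0 ^ e * (c + 1) ≤ omega0 ^ e * omega0 :=
      mul_le_mul_right (isSuccLimit_omega0.succ_lt hcw).le _
    rw [h2] at h1
    calc _ < _ := lt_of_lt_of_le h1 h3
    _ = omega0 ^ (e+1) := by rw [opow_add, opow_one]
  have hlog : log omega0 (omega0 ^ e * c + r) = e := by
    apply le_antisymm
    · have := (lt_opow_iff_log_lt one_lt_omega0 hα0).1 hlt
      exact Order.lt_add_one_iff.1 this
    · exact (opow_le_iff_le_log one_lt_omega0 hα0).1 hle
  have hdiv : (omega0 ^ e * c + r) / omega0 ^ e = c := by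
    rw [mul_add_div _ (opow_ne_zero e omega0_ne_zero), div_eq_zero_of_lt hr, add_zero]
  have hmod : (omega0 ^ e * c + r) % omega0 ^ e = r := by
    rw [mul_add_mod_self, mod_eq_of_lt hr]
  rw [CNF.ne_zero hα0, hlog, hdiv, hmod]

open Ordinal in
lemma exp_lt_self {o : Ordinal.{0}} (ho : o < eps0) {p : Ordinal × Ordinal}
    (hp : p ∈ CNF omega0 o) : p.1 < o := by
  have ho0 : o ≠ 0 := by rintro rfl; simp [CNF.zero_right] at hp
  have h1 : p.1 ≤ log omega0 o := CNF.fst_le_log hp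
  have h2 : p.1 < eps0 := lt_of_le_of_lt (h1.trans (log_le_self _ _)) ho
  calc p.1 < omega0 ^ p.1 := lt_omega0_opow_self h2
  _ ≤ omega0 ^ log omega0 o := opow_le_opow_right omega0_pos h1
  _ ≤ o := opow_log_le_self _ ho0

open Ordinal in
lemma exp_lt_eps0 {o : Ordinal.{0}} (ho : o < eps0) {p : Ordinal × Ordinal}
    (hp : p ∈ CNF omega0 o) : p.1 < eps0 := lt_trans (exp_lt_self ho hp) ho

open scoped Classical in
lemma coordBound_unfold (α : Ordinal.{0}) : coordBound α =
    ((Ordinal.CNF Ordinal.omega0 α).map (fun p =>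
      max (p.2.card.toNat) (if h : p.1 < α then coordBound p.1 else 0))).foldr max 0 :=
  WellFounded.fix_eq _ _ _

@[simp] lemma coordBound_zero : coordBound 0 = 0 := by
  rw [coordBound_unfold]; simp

open Ordinal in
lemma coordBound_eq {o : Ordinal.{0}} (ho : o < eps0) : coordBound o =
    ((CNF omega0 o).map (fun p => max (p.2.card.toNat) (coordBound p.1))).foldr max 0 := by
  rw [coordBound_unfold]
  congr 1
  apply List.map_congr_left
  intro p hp
  rw [dif_pos (exp_lt_self ho hp)]

open Ordinal in
lemma coordBound_mul_add {e c r : Ordinal.{0}} (he : e < eps0) (hc0 : c ≠ 0)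
    (hcw : c < omega0) (hr : r < omega0 ^ e) :
    coordBound (omega0 ^ e * c + r) = max (max c.card.toNat (coordBound e)) (coordBound r) := by
  have hre : r < eps0 := lt_trans hr (omega0_opow_lt_eps0 he)
  have hα : omega0 ^ e * c + r < eps0 := add_lt_eps0 (opow_mul_lt_eps0 he hcw) hre
  rw [coordBound_eq hα, CNF_mul_add hc0 hcw hr, List.map_cons, List.foldr_cons,
    coordBound_eq hre]

open Ordinal in
lemma card_toNat_cast {c : Ordinal.{0}} (hc : c < omega0) : ((c.card.toNat : ℕ) : Ordinal) = c := by
  obtain ⟨n, rfl⟩ := lt_omega0.1 hc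
  simp [Ordinal.card_nat]

open Ordinal in
lemma decomp {α : Ordinal.{0}} (h0 : α ≠ 0) :
    ∃ e c r : Ordinal.{0}, α = omega0 ^ e * c + r ∧ c ≠ 0 ∧ c < omega0 ∧ r < omega0 ^ e ∧
      e ≤ α ∧ r < α := by
  refine ⟨log omega0 α, α / omega0 ^ log omega0 α, α % omega0 ^ log omega0 α,
    (div_add_mod _ _).symm, ?_, div_opow_log_lt α one_lt_omega0, ?_, log_le_self _ _, ?_⟩
  · exact ne_of_gt ((div_opow_log_pos _ h0))
  · exact mod_lt _ (opow_ne_zero _ omega0_ne_zero)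
  · exact mod_opow_log_lt_self _ h0

open Ordinal in
lemma succ_of_last_exp_zero : ∀ o : Ordinal.{0}, o ≠ 0 →
    ∀ p : Ordinal × Ordinal, (CNF omega0 o).getLast? = some p → p.1 = 0 →
    ∃ t, o = t + 1 := by
  intro o
  induction o using Ordinal.induction with
  | h o IH =>
    intro h0 p hl hp
    obtain ⟨e, c, r, hα, hc0, hcw, hr, -, hro⟩ := decomp h0
    by_cases hr0 : r = 0
    · subst hr0
      rw [add_zero] at hα
      have hcnf : CNF omega0 o = [(e, c)] := by
        rw [hα, ← add_zero (omega0 ^ e * c), CNF_mul_add hc0 hcw (opow_pos e omega0_pos),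
          CNF.zero_right]
      rw [hcnf] at hl
      simp only [List.getLast?_singleton, Option.some.injEq] at hl
      subst hl
      simp only at hp
      subst hp
      rw [opow_zero, one_mul] at hα
      obtain ⟨n, rfl⟩ := lt_omega0.1 hcw
      obtain ⟨m, rfl⟩ := Nat.exists_eq_succ_of_ne_zero (by exact_mod_cast hc0)
      exact ⟨m, by rw [hα]; push_cast; ring⟩
    · have hcnf : CNF omega0 o = (e, c) :: CNF omega0 r := by rw [hα]; exact CNF_mul_add hc0 hcw hr
      have hne : CNF omega0 r ≠ [] := by
        rw [Ne, ← List.getLast?_eq_none_iff]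
        rw [CNF.ne_zero hr0]; simp [List.getLast?_cons]
      rw [hcnf, List.getLast?_cons] at hl
      obtain ⟨q, hq⟩ := Option.isSome_iff_exists.1 (List.getLast?_isSome.2 hne)
      rw [hq] at hl
      simp only [Option.getD_some, Option.some.injEq] at hl
      subst hl
      obtain ⟨t, ht⟩ := IH r hro hr0 q hq hp
      exact ⟨omega0 ^ e * c + t, by rw [hα, ht, add_assoc]⟩

open scoped Classical in
lemma fundSeq_unfold (x : ℕ) (α : Ordinal.{0}) : fundSeq x α =
    (if hα : α = 0 then 0
    else
      match hL : (Ordinal.CNF Ordinal.omega0 α).getLast? with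
      | none => 0
      | some p =>
        if p.1 = 0 then Ordinal.pred α
        else if h : p.1 < α then
          ofCNF ((Ordinal.CNF Ordinal.omega0 α).dropLast
            ++ [(p.1, p.2 - 1), (fundSeq x p.1, (x : Ordinal))])
        else 0) :=
  WellFounded.fix_eq _ _ _

@[simp] lemma fundSeq_zero (x : ℕ) : fundSeq x 0 = 0 := by
  rw [fundSeq_unfold]; simp

open Ordinal in
lemma fundSeq_of_last_zero {x : ℕ} {α : Ordinal.{0}} {p : Ordinal × Ordinal} (h0 : α ≠ 0)
    (hl : (CNF omega0 α).getLast? = some p) (hp : p.1 = 0) :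
    fundSeq x α = Ordinal.pred α := by
  rw [fundSeq_unfold, dif_neg h0]
  split
  · next heq => rw [heq] at hl; exact absurd hl (by simp)
  · next q heq =>
    rw [heq] at hl
    obtain rfl : q = p := by simpa using hl
    rw [if_pos hp]

open Ordinal in
lemma fundSeq_of_last_ne_zero {x : ℕ} {α : Ordinal.{0}} {p : Ordinal × Ordinal}
    (h0 : α ≠ 0) (hα : α < eps0)
    (hl : (CNF omega0 α).getLast? = some p) (hp : p.1 ≠ 0) :
    fundSeq x α = ofCNF ((CNF omega0 α).dropLast
      ++ [(p.1, p.2 - 1), (fundSeq x p.1, (x : Ordinal))]) := by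
  have hpm : p ∈ CNF omega0 α := List.mem_of_getLast? hl
  have hpa : p.1 < α := exp_lt_self hα hpm
  rw [fundSeq_unfold, dif_neg h0]
  split
  · next heq => rw [heq] at hl; exact absurd hl (by simp)
  · next q heq =>
    rw [heq] at hl
    obtain rfl : q = p := by simpa using hl
    rw [if_neg hp, dif_pos hpa]

lemma ofCNF_cons (p : Ordinal.{0} × Ordinal.{0}) (L : List (Ordinal.{0} × Ordinal.{0})) :
    ofCNF (p :: L) = Ordinal.omega0 ^ p.1 * p.2 + ofCNF L := rfl

@[simp] lemma ofCNF_nil : ofCNF [] = 0 := rfl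

open Ordinal in
lemma CNF_opow_mul {e c : Ordinal.{0}} (hc0 : c ≠ 0) (hcw : c < omega0) :
    CNF omega0 (omega0 ^ e * c) = [(e, c)] := by
  rw [← add_zero (omega0 ^ e * c), CNF_mul_add hc0 hcw (opow_pos e omega0_pos), CNF.zero_right]

open Ordinal in
lemma fundSeq_of_lt_omega0 {x : ℕ} {c : Ordinal.{0}} (hc0 : c ≠ 0) (hcw : c < omega0) :
    fundSeq x c = Ordinal.pred c := by
  apply fundSeq_of_last_zero hc0 (p := (0, c)) _ rfl
  rw [CNF.of_lt hc0 hcw]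
  rfl

open Ordinal in
lemma fundSeq_opow_mul {x : ℕ} {e c : Ordinal.{0}} (he : e < eps0) (he0 : e ≠ 0)
    (hc0 : c ≠ 0) (hcw : c < omega0) :
    fundSeq x (omega0 ^ e * c) =
      omega0 ^ e * (c - 1) + omega0 ^ (fundSeq x e) * (x : Ordinal) := by
  have h0 : omega0 ^ e * c ≠ 0 :=
    ne_of_gt (mul_pos (opow_pos e omega0_pos) (pos_iff_ne_zero.2 hc0))
  have hα : omega0 ^ e * c < eps0 := opow_mul_lt_eps0 he hcw
  have hl : (CNF omega0 (omega0 ^ e * c)).getLast? = some (e, c) := by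
    rw [CNF_opow_mul hc0 hcw]; rfl
  rw [fundSeq_of_last_ne_zero h0 hα hl he0, CNF_opow_mul hc0 hcw]
  simp [ofCNF_cons]

open Ordinal in
lemma fundSeq_step {x : ℕ} {e c r : Ordinal.{0}} (he : e < eps0) (hc0 : c ≠ 0)
    (hcw : c < omega0) (hr0 : r ≠ 0) (hr : r < omega0 ^ e) :
    fundSeq x (omega0 ^ e * c + r) = omega0 ^ e * c + fundSeq x r := by
  have hre : r < eps0 := lt_trans hr (omega0_opow_lt_eps0 he)
  have hα : omega0 ^ e * c + r < eps0 := add_lt_eps0 (opow_mul_lt_eps0 he hcw) hre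
  have h0 : omega0 ^ e * c + r ≠ 0 := by
    refine ne_of_gt (lt_of_lt_of_le (mul_pos (opow_pos e omega0_pos)
      (pos_iff_ne_zero.2 hc0)) (le_self_add))
  have hcnf : CNF omega0 (omega0 ^ e * c + r) = (e, c) :: CNF omega0 r :=
    CNF_mul_add hc0 hcw hr
  have hne : CNF omega0 r ≠ [] := by rw [CNF.ne_zero hr0]; exact List.cons_ne_nil _ _
  obtain ⟨p, hp⟩ := Option.isSome_iff_exists.1 (List.getLast?_isSome.2 hne)
  have hl : (CNF omega0 (omega0 ^ e * c + r)).getLast? = some p := by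
    rw [hcnf, List.getLast?_cons, hp]; rfl
  have hdrop : (CNF omega0 (omega0 ^ e * c + r)).dropLast = (e, c) :: (CNF omega0 r).dropLast := by
    rw [hcnf, List.dropLast_cons_of_ne_nil hne]
  by_cases hp1 : p.1 = 0
  · obtain ⟨t, rfl⟩ := succ_of_last_exp_zero r hr0 p hp hp1
    rw [fundSeq_of_last_zero h0 hl hp1, fundSeq_of_last_zero hr0 hp hp1]
    rw [add_one_eq_succ, Ordinal.pred_succ, Ordinal.add_succ, Ordinal.pred_succ]
  · rw [fundSeq_of_last_ne_zero h0 hα hl hp1, fundSeq_of_last_ne_zero hr0 hre hp hp1,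
      hdrop, List.cons_append, ofCNF_cons]

open Ordinal in
lemma sub_one_add_one_of_lt_omega0 {c : Ordinal.{0}} (hc0 : c ≠ 0) (hcw : c < Ordinal.omega0) :
    c - 1 + 1 = c := by
  obtain ⟨n, rfl⟩ := Ordinal.lt_omega0.1 hcw
  obtain ⟨m, rfl⟩ := Nat.exists_eq_succ_of_ne_zero (by exact_mod_cast hc0)
  rw [← Nat.cast_one, ← Ordinal.natCast_sub, ← Nat.cast_add]
  norm_num

open Ordinal in
lemma pred_lt_of_lt_omega0 {c : Ordinal.{0}} (hc0 : c ≠ 0) (hcw : c < omega0) :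
    Ordinal.pred c < c := by
  obtain ⟨n, rfl⟩ := lt_omega0.1 hcw
  obtain ⟨m, rfl⟩ := Nat.exists_eq_succ_of_ne_zero (by exact_mod_cast hc0)
  have : ((m + 1 : ℕ) : Ordinal) = Order.succ (m : Ordinal) := by
    push_cast; rw [add_one_eq_succ]
  rw [this, Ordinal.pred_succ]
  exact Order.lt_succ _

open Ordinal in
lemma opow_mul_nat_lt {f e : Ordinal.{0}} (h : f < e) (x : ℕ) :
    omega0 ^ f * (x : Ordinal) < omega0 ^ e := by
  calc omega0 ^ f * (x : Ordinal) < omega0 ^ f * omega0 :=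
        (mul_lt_mul_iff_right₀ (opow_pos f omega0_pos)).2 (nat_lt_omega0 x)
  _ = omega0 ^ (f + 1) := by rw [opow_add, opow_one]
  _ ≤ omega0 ^ e := opow_le_opow_right omega0_pos (by rwa [add_one_eq_succ, Order.succ_le_iff])

open Ordinal in
lemma fundSeq_lt {x : ℕ} : ∀ α : Ordinal.{0}, α ≠ 0 → α < eps0 → fundSeq x α < α := by
  intro α
  induction α using Ordinal.induction with
  | h α IH =>
    intro h0 hα
    obtain ⟨e, c, r, rfl, hc0, hcw, hr, hea, hro⟩ := decomp h0
    have he : e < eps0 := lt_of_le_of_lt hea hα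
    by_cases hr0 : r = 0
    · subst hr0
      rw [add_zero] at *
      by_cases he0 : e = 0
      · subst he0
        rw [opow_zero, one_mul] at *
        rw [fundSeq_of_lt_omega0 hc0 hcw]
        exact pred_lt_of_lt_omega0 hc0 hcw
      · have heα : e < omega0 ^ e * c := by
          calc e < omega0 ^ e := lt_omega0_opow_self he
          _ = omega0 ^ e * 1 := (mul_one _).symm
          _ ≤ omega0 ^ e * c := mul_le_mul_right (Ordinal.one_le_iff_ne_zero.2 hc0) _
        have hfe : fundSeq x e < e := IH e heα he0 he
        rw [fundSeq_opow_mul he he0 hc0 hcw]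
        calc omega0 ^ e * (c - 1) + omega0 ^ (fundSeq x e) * (x : Ordinal)
            < omega0 ^ e * (c - 1) + omega0 ^ e := add_lt_add_right (opow_mul_nat_lt hfe x) _
        _ = omega0 ^ e * ((c - 1) + 1) := by rw [mul_add, mul_one]
        _ = omega0 ^ e * c := by rw [sub_one_add_one_of_lt_omega0 hc0 hcw]
    · have hre : r < eps0 := lt_trans hr (omega0_opow_lt_eps0 he)
      rw [fundSeq_step he hc0 hcw hr0 hr]
      exact add_lt_add_right (IH r hro hr0 hre) _

open Ordinal in
lemma fundSeq_lt_eps0 {x : ℕ} {α : Ordinal.{0}} (hα : α < eps0) : fundSeq x α < eps0 := by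
  by_cases h0 : α = 0
  · subst h0; simpa using eps0_pos
  · exact lt_trans (fundSeq_lt α h0 hα) hα

open Ordinal in
lemma fundSeq_mono {x y : ℕ} (hxy : x ≤ y) : ∀ α : Ordinal.{0}, α < eps0 →
    fundSeq x α ≤ fundSeq y α := by
  intro α
  induction α using Ordinal.induction with
  | h α IH =>
    intro hα
    by_cases h0 : α = 0
    · subst h0; simp
    obtain ⟨e, c, r, rfl, hc0, hcw, hr, hea, hro⟩ := decomp h0
    have he : e < eps0 := lt_of_le_of_lt hea hα
    by_cases hr0 : r = 0
    · subst hr0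
      rw [add_zero] at *
      by_cases he0 : e = 0
      · subst he0
        rw [opow_zero, one_mul] at *
        rw [fundSeq_of_lt_omega0 (x := x) hc0 hcw, fundSeq_of_lt_omega0 (x := y) hc0 hcw]
      · have heα : e < omega0 ^ e * c := by
          calc e < omega0 ^ e := lt_omega0_opow_self he
          _ = omega0 ^ e * 1 := (mul_one _).symm
          _ ≤ omega0 ^ e * c := mul_le_mul_right (Ordinal.one_le_iff_ne_zero.2 hc0) _
        rw [fundSeq_opow_mul (x := x) he he0 hc0 hcw, fundSeq_opow_mul (x := y) he he0 hc0 hcw]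
        apply add_le_add_right
        exact mul_le_mul' (opow_le_opow_right omega0_pos (IH e heα he)) (by exact_mod_cast hxy)
    · have hre : r < eps0 := lt_trans hr (omega0_opow_lt_eps0 he)
      rw [fundSeq_step (x := x) he hc0 hcw hr0 hr, fundSeq_step (x := y) he hc0 hcw hr0 hr]
      exact add_le_add_right (IH r hro hre) _

open Ordinal in
lemma omega0_lt_eps0 : omega0 < eps0 := by
  have := omega0_opow_lt_eps0 one_lt_eps0
  rwa [opow_one] at this

@[simp] lemma card_toNat_nat (x : ℕ) : ((x : Ordinal.{0}).card.toNat) = x := by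
  simp [Ordinal.card_nat]

open Ordinal in
lemma card_toNat_sub_one_le {c : Ordinal.{0}} (hcw : c < omega0) :
    (c - 1).card.toNat ≤ c.card.toNat := by
  obtain ⟨n, rfl⟩ := lt_omega0.1 hcw
  have h : ((n : Ordinal) - 1) = ((n - 1 : ℕ) : Ordinal) := by
    rw [Ordinal.natCast_sub, Nat.cast_one]
  rw [h, card_toNat_nat, card_toNat_nat]
  exact Nat.sub_le n 1

open Ordinal in
lemma coordBound_natCast (n : ℕ) : coordBound (n : Ordinal.{0}) = n := by
  rcases Nat.eq_zero_or_pos n with h | h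
  · subst h; simp
  · rw [← add_zero ((n:Ordinal)), ← one_mul ((n:Ordinal)), ← opow_zero omega0,
      coordBound_mul_add (lt_of_lt_of_le zero_lt_one one_lt_eps0.le)
        (by exact_mod_cast h.ne') (nat_lt_omega0 n) (by simp [opow_zero])]
    simp

open Ordinal in
lemma coordBound_le_mul_add {e c r : Ordinal.{0}} (he : e < eps0) (hcw : c < omega0)
    (hr : r < omega0 ^ e) :
    coordBound (omega0 ^ e * c + r) ≤ max (max c.card.toNat (coordBound e)) (coordBound r) := by
  by_cases hc0 : c = 0
  · subst hc0
    rw [mul_zero, zero_add]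
    exact le_max_right _ _
  · rw [coordBound_mul_add he hc0 hcw hr]

open Ordinal in
lemma coordBound_fundSeq_le {x : ℕ} : ∀ α : Ordinal.{0}, α < eps0 →
    coordBound (fundSeq x α) ≤ max (coordBound α) x := by
  intro α
  induction α using Ordinal.induction with
  | h α IH =>
    intro hα
    by_cases h0 : α = 0
    · subst h0; simp
    obtain ⟨e, c, r, rfl, hc0, hcw, hr, hea, hro⟩ := decomp h0
    have he : e < eps0 := lt_of_le_of_lt hea hα
    have hre : r < eps0 := lt_trans hr (omega0_opow_lt_eps0 he)
    have hcb : coordBound (omega0 ^ e * c + r) =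
        max (max c.card.toNat (coordBound e)) (coordBound r) :=
      coordBound_mul_add he hc0 hcw hr
    by_cases hr0 : r = 0
    · subst hr0
      rw [add_zero] at *
      by_cases he0 : e = 0
      · subst he0
        rw [opow_zero, one_mul] at *
        rw [fundSeq_of_lt_omega0 hc0 hcw]
        obtain ⟨n, rfl⟩ := lt_omega0.1 hcw
        obtain ⟨m, rfl⟩ := Nat.exists_eq_succ_of_ne_zero (by exact_mod_cast hc0)
        have hpred : Ordinal.pred ((m + 1 : ℕ) : Ordinal) = (m : Ordinal) := by
          push_cast
          rw [add_one_eq_succ, Ordinal.pred_succ]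
        rw [hpred, coordBound_natCast, coordBound_natCast]
        omega
      · have heα : e < omega0 ^ e * c := by
          calc e < omega0 ^ e := lt_omega0_opow_self he
          _ = omega0 ^ e * 1 := (mul_one _).symm
          _ ≤ omega0 ^ e * c := mul_le_mul_right (Ordinal.one_le_iff_ne_zero.2 hc0) _
        have hfe : fundSeq x e < e := fundSeq_lt e he0 he
        have hfeps : fundSeq x e < eps0 := lt_trans hfe he
        rw [fundSeq_opow_mul he he0 hc0 hcw]
        have hinner : coordBound (omega0 ^ (fundSeq x e) * (x : Ordinal)) ≤
            max (max x (coordBound (fundSeq x e))) 0 := by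
          have h := coordBound_le_mul_add (c := (x : Ordinal)) (r := 0) hfeps (nat_lt_omega0 x)
            (opow_pos _ omega0_pos)
          rw [add_zero] at h
          simpa using h
        have houter := coordBound_le_mul_add (c := c - 1)
          (r := omega0 ^ (fundSeq x e) * (x : Ordinal)) he
          (lt_of_le_of_lt (Ordinal.sub_le_self c 1) hcw) (opow_mul_nat_lt hfe x)
        have hIH : coordBound (fundSeq x e) ≤ max (coordBound e) x := IH e heα he
        have hc1 : (c - 1).card.toNat ≤ c.card.toNat := card_toNat_sub_one_le hcw
        rw [hcb, coordBound_zero]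
        omega
    · have hfr : fundSeq x r < omega0 ^ e := lt_trans (fundSeq_lt r hr0 hre) hr
      rw [fundSeq_step he hc0 hcw hr0 hr]
      have h1 := coordBound_le_mul_add (c := c) (r := fundSeq x r) he hcw hfr
      have hIH : coordBound (fundSeq x r) ≤ max (coordBound r) x := IH r hro hre
      rw [hcb]
      omega

open Ordinal in
lemma le_fundSeq_of_lt {x : ℕ} : ∀ α : Ordinal.{0}, α < eps0 → ∀ β : Ordinal.{0}, β < α →
    coordBound β < x → β ≤ fundSeq x α := by
  intro α
  induction α using Ordinal.induction with
  | h α IH =>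
    intro hα β hβα hcb
    have h0 : α ≠ 0 := by rintro rfl; exact not_lt_zero' hβα
    obtain ⟨e, c, r, rfl, hc0, hcw, hr, hea, hro⟩ := decomp h0
    have he : e < eps0 := lt_of_le_of_lt hea hα
    have hre : r < eps0 := lt_trans hr (omega0_opow_lt_eps0 he)
    by_cases hr0 : r = 0
    · subst hr0
      rw [add_zero] at *
      by_cases he0 : e = 0
      · subst he0
        rw [opow_zero, one_mul] at *
        obtain ⟨n, rfl⟩ := lt_omega0.1 hcw
        obtain ⟨m, rfl⟩ := Nat.exists_eq_succ_of_ne_zero (by exact_mod_cast hc0)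
        rw [fundSeq_of_lt_omega0 hc0 hcw]
        have hpred : Ordinal.pred ((m + 1 : ℕ) : Ordinal) = (m : Ordinal) := by
          push_cast
          rw [add_one_eq_succ, Ordinal.pred_succ]
        rw [hpred]
        have : ((m + 1 : ℕ) : Ordinal) = Order.succ (m : Ordinal) := by
          push_cast; rw [add_one_eq_succ]
        rw [this] at hβα
        exact Order.lt_succ_iff.1 hβα
      · have heα : e < omega0 ^ e * c := by
          calc e < omega0 ^ e := lt_omega0_opow_self he
          _ = omega0 ^ e * 1 := (mul_one _).symm
          _ ≤ omega0 ^ e * c := mul_le_mul_right (Ordinal.one_le_iff_ne_zero.2 hc0) _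
        set f := fundSeq x e with hf
        have hfe : f < e := fundSeq_lt e he0 he
        rw [fundSeq_opow_mul he he0 hc0 hcw, ← hf]
        by_cases hble : β ≤ omega0 ^ e * (c - 1)
        · exact le_trans hble (le_self_add)
        · push_neg at hble
          set δ := β - omega0 ^ e * (c - 1) with hδ
          have hβδ : β = omega0 ^ e * (c - 1) + δ :=
            (Ordinal.add_sub_cancel_of_le hble.le).symm
          have hsplit : omega0 ^ e * c = omega0 ^ e * (c - 1) + omega0 ^ e := by
            rw [← mul_add_one, sub_one_add_one_of_lt_omega0 hc0 hcw]
          have hδe : δ < omega0 ^ e := by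
            rw [hβδ, hsplit] at hβα
            exact (add_lt_add_iff_left _).1 hβα
          have hδcb : coordBound δ < x := by
            by_cases hc1 : c - 1 = 0
            · rw [hc1, mul_zero, zero_add] at hβδ
              rwa [← hβδ]
            · have := coordBound_mul_add (c := c - 1) (r := δ) he hc1
                (lt_of_le_of_lt (Ordinal.sub_le_self c 1) hcw) hδe
              rw [← hβδ] at this
              rw [this] at hcb
              omega
          -- show δ ≤ ω ^ f * x
          have hkey : δ ≤ omega0 ^ f * (x : Ordinal) := by
            by_cases hδ0 : δ = 0
            · rw [hδ0]; exact zero_le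
            · obtain ⟨d, m, ρ, hδeq, hm0, hmw, hρ, hda, hρδ⟩ := decomp hδ0
              have hδeps : δ < eps0 := lt_trans hδe (omega0_opow_lt_eps0 he)
              have hdeps : d < eps0 := lt_of_le_of_lt hda hδeps
              have hde : d < e := by
                have h1 : omega0 ^ d ≤ δ := by
                  rw [hδeq]
                  calc omega0 ^ d = omega0 ^ d * 1 := (mul_one _).symm
                  _ ≤ omega0 ^ d * m := mul_le_mul_right (Ordinal.one_le_iff_ne_zero.2 hm0) _
                  _ ≤ _ := le_self_add
                exact (opow_lt_opow_iff_right one_lt_omega0).1 (lt_of_le_of_lt h1 hδe)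
              have hdcb : coordBound d < x ∧ m.card.toNat < x := by
                have := coordBound_mul_add (c := m) (r := ρ) hdeps hm0 hmw hρ
                rw [← hδeq] at this
                rw [this] at hδcb
                omega
              have hdf : d ≤ f := IH e heα he d hde hdcb.1
              have hmx : m + 1 ≤ (x : Ordinal) := by
                have h1 : (m.card.toNat : Ordinal) = m := card_toNat_cast hmw
                rw [← h1]
                have : (m.card.toNat + 1 : ℕ) ≤ x := hdcb.2
                exact_mod_cast this
              refine le_of_lt ?_
              calc δ = omega0 ^ d * m + ρ := hδeq
              _ < omega0 ^ d * m + omega0 ^ d := add_lt_add_right hρ _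
              _ = omega0 ^ d * (m + 1) := by rw [mul_add_one]
              _ ≤ omega0 ^ f * (x : Ordinal) :=
                  mul_le_mul' (opow_le_opow_right omega0_pos hdf) hmx
          rw [hβδ]
          exact add_le_add_right hkey _
    · rw [fundSeq_step he hc0 hcw hr0 hr]
      by_cases hble : β ≤ omega0 ^ e * c
      · exact le_trans hble (le_self_add)
      · push_neg at hble
        set δ := β - omega0 ^ e * c with hδ
        have hβδ : β = omega0 ^ e * c + δ := (Ordinal.add_sub_cancel_of_le hble.le).symm
        have hδr : δ < r := by
          rw [hβδ] at hβα
          exact (add_lt_add_iff_left _).1 hβα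
        have hδcb : coordBound δ < x := by
          have := coordBound_mul_add (c := c) (r := δ) he hc0 hcw (lt_trans hδr hr)
          rw [← hβδ] at this
          rw [this] at hcb
          omega
        rw [hβδ]
        exact add_le_add_right (IH r hro hre δ hδr hδcb) _

open scoped Classical in
lemma iterOrd_unfold (g : ℕ → ℕ) (α : Ordinal.{0}) : iterOrd g α =
    (fun b => if hα : α = 0 then b
      else if h : fundSeq b α < α then iterOrd g (fundSeq b α) (g b)
      else 0) :=
  WellFounded.fix_eq _ _ _

@[simp] lemma iterOrd_zero (g : ℕ → ℕ) (b : ℕ) : iterOrd g 0 b = b := by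
  rw [iterOrd_unfold]; simp

lemma iterOrd_ne_zero (g : ℕ → ℕ) {α : Ordinal.{0}} (h0 : α ≠ 0) (hα : α < eps0) (b : ℕ) :
    iterOrd g α b = iterOrd g (fundSeq b α) (g b) := by
  rw [iterOrd_unfold]
  simp only
  rw [dif_neg h0, dif_pos (fundSeq_lt α h0 hα)]

lemma iterOrd_main (g : ℕ → ℕ) (hg : Monotone g) (hg1 : ∀ x, x + 1 ≤ g x) :
    ∀ α : Ordinal.{0}, α < eps0 →
      (∀ β b, β < α → coordBound β < b → iterOrd g β b ≤ iterOrd g α b) ∧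
      (∀ b b', coordBound α < b → b ≤ b' → iterOrd g α b ≤ iterOrd g α b') := by
  intro α
  induction α using Ordinal.induction with
  | h α IH =>
    intro hα
    constructor
    · intro β b hβα hcb
      have h0 : α ≠ 0 := by rintro rfl; exact not_lt_zero' hβα
      have hβ : β < eps0 := lt_trans hβα hα
      rw [iterOrd_ne_zero g h0 hα b]
      have hF : fundSeq b α < α := fundSeq_lt α h0 hα
      have hFeps : fundSeq b α < eps0 := lt_trans hF hα
      have hbgb : b ≤ g b := le_trans (Nat.le_succ b) (hg1 b)
      have hβF : β ≤ fundSeq b α := le_fundSeq_of_lt α hα β hβα hcb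
      rcases eq_or_lt_of_le hβF with heq | hlt
      · subst heq
        exact (IH _ hF hFeps).2 b (g b) hcb hbgb
      · calc iterOrd g β b ≤ iterOrd g β (g b) := (IH β hβα hβ).2 b (g b) hcb hbgb
        _ ≤ iterOrd g (fundSeq b α) (g b) := by
            refine (IH _ hF hFeps).1 β (g b) hlt ?_
            have := hg1 b
            omega
    · intro b b' hcb hbb'
      by_cases h0 : α = 0
      · subst h0; simpa using hbb'
      rw [iterOrd_ne_zero g h0 hα b, iterOrd_ne_zero g h0 hα b']
      have hF : fundSeq b α < α := fundSeq_lt α h0 hα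
      have hF' : fundSeq b' α < α := fundSeq_lt α h0 hα
      have hFeps : fundSeq b α < eps0 := lt_trans hF hα
      have hF'eps : fundSeq b' α < eps0 := lt_trans hF' hα
      have hm : fundSeq b α ≤ fundSeq b' α := fundSeq_mono hbb' α hα
      have hcbF : coordBound (fundSeq b α) ≤ b := by
        have := coordBound_fundSeq_le (x := b) α hα
        omega
      have step1 : iterOrd g (fundSeq b α) (g b) ≤ iterOrd g (fundSeq b α) (g b') := by
        refine (IH _ hF hFeps).2 (g b) (g b') ?_ (hg hbb')
        have := hg1 b
        omega
      refine le_trans step1 ?_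
      rcases eq_or_lt_of_le hm with heq | hlt
      · rw [heq]
      · refine (IH _ hF' hF'eps).1 (fundSeq b α) (g b') hlt ?_
        have := hg1 b'
        omega

/-- Monotonicity of transfinite iterates: if `g` is monotone with `g b ≥ b+1`,
`b ≥ 1`, `α > β` are ordinals below `ε₀`, and `|β| < b`, then `g^β(b) ≤ g^α(b)`. -/
theorem iterOrd_mono (g : ℕ → ℕ) (hg : Monotone g) (hg1 : ∀ x, x + 1 ≤ g x)
    (b : ℕ) (hb : 1 ≤ b) (α β : Ordinal.{0}) (hα : α < eps0) (hβ : β < eps0)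
    (hlt : β < α) (hcoord : coordBound β < b) :
    iterOrd g β b ≤ iterOrd g α b :=
  (iterOrd_main g hg hg1 α hα).1 β b hlt hcoord
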